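/- For every finite simple graph G without open twins and without closed twins, G has an FD-code and the FD-number of G is at most the F-number of G plus one, i.e., γ^FD(G) ≤ γ^F(G) + 1. -/

import Mathlib

open Finset

namespace SepDom

variable {V : Type*} [Fintype V] [DecidableEq V]

/-- The closed neighborhood `N[v]` of a vertex as a `Finset`. -/
def closedNbhd (G : SimpleGraph V) [DecidableRel G.Adj] (v : V) : Finset V :=
  insert v (G.neighborFinset v)

/-- `C` is a dominating set: `N[v] ∩ C ≠ ∅` for all `v`. -/
def IsDomSet (G : SimpleGraph V) [DecidableRel G.Adj] (C : Finset V) : Prop :=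
  ∀ v : V, (closedNbhd G v ∩ C).Nonempty

/-- `C` is a total-dominating set: `N(v) ∩ C ≠ ∅` for all `v`. -/
def IsTotalDomSet (G : SimpleGraph V) [DecidableRel G.Adj] (C : Finset V) : Prop :=
  ∀ v : V, (G.neighborFinset v ∩ C).Nonempty

/-- `C` is a locating set (L-set): the sets `N(v) ∩ C`, `v ∉ C`, are pairwise distinct. -/
def IsLSet (G : SimpleGraph V) [DecidableRel G.Adj] (C : Finset V) : Prop :=
  ∀ u ∉ C, ∀ v ∉ C, G.neighborFinset u ∩ C = G.neighborFinset v ∩ C → u = v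

/-- `C` is an open-separating set (O-set): the sets `N(v) ∩ C` are pairwise distinct. -/
def IsOSet (G : SimpleGraph V) [DecidableRel G.Adj] (C : Finset V) : Prop :=
  ∀ u v : V, G.neighborFinset u ∩ C = G.neighborFinset v ∩ C → u = v

/-- `C` is a closed-separating set (I-set): the sets `N[v] ∩ C` are pairwise distinct. -/
def IsISet (G : SimpleGraph V) [DecidableRel G.Adj] (C : Finset V) : Prop :=
  ∀ u v : V, closedNbhd G u ∩ C = closedNbhd G v ∩ C → u = v

/-- `C` is a full-separating set (F-set): both open- and closed-separating. -/
def IsFSet (G : SimpleGraph V) [DecidableRel G.Adj] (C : Finset V) : Prop :=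
  IsOSet G C ∧ IsISet G C

/-- `G` has open twins: distinct non-adjacent vertices with equal open neighborhoods. -/
def HasOpenTwins (G : SimpleGraph V) [DecidableRel G.Adj] : Prop :=
  ∃ u v : V, u ≠ v ∧ ¬ G.Adj u v ∧ G.neighborFinset u = G.neighborFinset v

/-- `G` has closed twins: distinct adjacent vertices with equal closed neighborhoods. -/
def HasClosedTwins (G : SimpleGraph V) [DecidableRel G.Adj] : Prop :=
  ∃ u v : V, u ≠ v ∧ G.Adj u v ∧ closedNbhd G u = closedNbhd G v

/-- `G` has an isolated vertex: a vertex with empty open neighborhood. -/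
def HasIsolated (G : SimpleGraph V) [DecidableRel G.Adj] : Prop :=
  ∃ v : V, G.neighborFinset v = ∅

/-- The L-number: minimum cardinality of an L-set. -/
noncomputable def lNum (G : SimpleGraph V) [DecidableRel G.Adj] : ℕ :=
  sInf {n | ∃ C : Finset V, IsLSet G C ∧ C.card = n}

/-- The O-number: minimum cardinality of an O-set. -/
noncomputable def oNum (G : SimpleGraph V) [DecidableRel G.Adj] : ℕ :=
  sInf {n | ∃ C : Finset V, IsOSet G C ∧ C.card = n}

/-- The I-number: minimum cardinality of an I-set. -/
noncomputable def iNum (G : SimpleGraph V) [DecidableRel G.Adj] : ℕ :=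
  sInf {n | ∃ C : Finset V, IsISet G C ∧ C.card = n}

/-- The F-number: minimum cardinality of an F-set. -/
noncomputable def fNum (G : SimpleGraph V) [DecidableRel G.Adj] : ℕ :=
  sInf {n | ∃ C : Finset V, IsFSet G C ∧ C.card = n}

/-- The LD-number: minimum cardinality of an LD-code. -/
noncomputable def ldNum (G : SimpleGraph V) [DecidableRel G.Adj] : ℕ :=
  sInf {n | ∃ C : Finset V, IsDomSet G C ∧ IsLSet G C ∧ C.card = n}

/-- The OD-number: minimum cardinality of an OD-code. -/
noncomputable def odNum (G : SimpleGraph V) [DecidableRel G.Adj] : ℕ :=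
  sInf {n | ∃ C : Finset V, IsDomSet G C ∧ IsOSet G C ∧ C.card = n}

/-- The ID-number: minimum cardinality of an ID-code. -/
noncomputable def idNum (G : SimpleGraph V) [DecidableRel G.Adj] : ℕ :=
  sInf {n | ∃ C : Finset V, IsDomSet G C ∧ IsISet G C ∧ C.card = n}

/-- The FD-number: minimum cardinality of an FD-code. -/
noncomputable def fdNum (G : SimpleGraph V) [DecidableRel G.Adj] : ℕ :=
  sInf {n | ∃ C : Finset V, IsDomSet G C ∧ IsFSet G C ∧ C.card = n}

/-- The LTD-number: minimum cardinality of an LTD-code. -/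
noncomputable def ltdNum (G : SimpleGraph V) [DecidableRel G.Adj] : ℕ :=
  sInf {n | ∃ C : Finset V, IsTotalDomSet G C ∧ IsLSet G C ∧ C.card = n}

/-- The OTD-number: minimum cardinality of an OTD-code. -/
noncomputable def otdNum (G : SimpleGraph V) [DecidableRel G.Adj] : ℕ :=
  sInf {n | ∃ C : Finset V, IsTotalDomSet G C ∧ IsOSet G C ∧ C.card = n}

/-- The ITD-number: minimum cardinality of an ITD-code. -/
noncomputable def itdNum (G : SimpleGraph V) [DecidableRel G.Adj] : ℕ :=
  sInf {n | ∃ C : Finset V, IsTotalDomSet G C ∧ IsISet G C ∧ C.card = n}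

/-- The FTD-number: minimum cardinality of an FTD-code. -/
noncomputable def ftdNum (G : SimpleGraph V) [DecidableRel G.Adj] : ℕ :=
  sInf {n | ∃ C : Finset V, IsTotalDomSet G C ∧ IsFSet G C ∧ C.card = n}

end SepDom

open SepDom

theorem fd_le_f_add_one {V : Type*} [Fintype V] [DecidableEq V]
    (G : SimpleGraph V) [DecidableRel G.Adj]
    (hOT : ¬ HasOpenTwins G) (hCT : ¬ HasClosedTwins G) :
    (∃ C : Finset V, IsDomSet G C ∧ IsFSet G C) ∧ fdNum G ≤ fNum G + 1 := by
  classical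
  -- monotonicity of F-sets
  have mono : ∀ C C' : Finset V, C ⊆ C' → IsFSet G C → IsFSet G C' := by
    rintro C C' hsub ⟨hO, hI⟩
    have key : ∀ A B : Finset V, A ∩ C' = B ∩ C' → A ∩ C = B ∩ C := by
      intro A B h
      have : A ∩ C' ∩ C = B ∩ C' ∩ C := by rw [h]
      rwa [inter_assoc, inter_assoc, inter_eq_right.2 hsub] at this
    exact ⟨fun u v h => hO u v (key _ _ h), fun u v h => hI u v (key _ _ h)⟩
  -- univ is an F-set
  have hu : IsFSet G (univ : Finset V) := by
    constructor
    · intro u v h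
      simp only [inter_univ] at h
      by_contra hne
      by_cases hadj : G.Adj u v
      · have : u ∈ G.neighborFinset u := by rw [h]; simpa [SimpleGraph.mem_neighborFinset] using hadj.symm
        simp [SimpleGraph.mem_neighborFinset] at this
      · exact hOT ⟨u, v, hne, hadj, h⟩
    · intro u v h
      simp only [inter_univ] at h
      by_contra hne
      by_cases hadj : G.Adj u v
      · exact hCT ⟨u, v, hne, hadj, h⟩
      · have : u ∈ closedNbhd G v := by rw [← h]; exact mem_insert_self _ _
        rcases mem_insert.1 this with h1 | h1
        · exact hne h1
        · have : G.Adj v u := by simpa [SimpleGraph.mem_neighborFinset] using h1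
          exact hadj this.symm
  -- get a minimum F-set
  have hne : {n | ∃ C : Finset V, IsFSet G C ∧ C.card = n}.Nonempty :=
    ⟨_, univ, hu, rfl⟩
  obtain ⟨C, hCF, hCcard⟩ := Nat.sInf_mem hne
  -- build a dominating F-set from C
  have build : ∃ C' : Finset V, IsDomSet G C' ∧ IsFSet G C' ∧ C'.card ≤ C.card + 1 := by
    by_cases hdom : IsDomSet G C
    · exact ⟨C, hdom, hCF, Nat.le_succ _⟩
    · simp only [IsDomSet, not_forall] at hdom
      obtain ⟨v, hv⟩ := hdom
      have hvE : closedNbhd G v ∩ C = ∅ := not_nonempty_iff_eq_empty.1 hv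
      refine ⟨insert v C, ?_, mono _ _ (subset_insert _ _) hCF, card_insert_le _ _⟩
      intro w
      by_cases hw : (closedNbhd G w ∩ C).Nonempty
      · obtain ⟨x, hx⟩ := hw
        exact ⟨x, mem_inter.2 ⟨(mem_inter.1 hx).1, mem_insert_of_mem (mem_inter.1 hx).2⟩⟩
      · have hwE : closedNbhd G w ∩ C = ∅ := not_nonempty_iff_eq_empty.1 hw
        have : w = v := hCF.2 w v (by rw [hwE, hvE])
        subst this
        exact ⟨w, mem_inter.2 ⟨mem_insert_self _ _, mem_insert_self _ _⟩⟩
  obtain ⟨C', hD, hF, hcard⟩ := build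
  refine ⟨⟨C', hD, hF⟩, ?_⟩
  calc fdNum G ≤ C'.card := Nat.sInf_le ⟨C', hD, hF, rfl⟩
    _ ≤ C.card + 1 := hcard
    _ = fNum G + 1 := by rw [hCcard]; rfl
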